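/- Every zero-median solution x_1, …, x_N of the recursion is antisymmetric: x_n = −x_{N+1−n} for all n = 1, …, N. -/

import Mathlib

open Finset

/-- Partial sum `S_n = x_1 + ... + x_n`. -/
noncomputable def S (x : ℕ → ℝ) (n : ℕ) : ℝ := ∑ i ∈ Finset.Icc 1 n, x i

/-- `x_1, ..., x_N` is a solution of the recursion `x_{n+1} = x_n - 1/S_n`
with all relevant partial sums nonzero. -/
def IsSolution (N : ℕ) (x : ℕ → ℝ) : Prop :=
  ∀ n, 1 ≤ n → n ≤ N - 1 → S x n ≠ 0 ∧ x (n + 1) = x n - 1 / S x n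

/-- Zero-median property: the middle value is `0` when `N` is odd, and the two middle
values are negatives of each other when `N` is even. -/
def ZeroMedian (N : ℕ) (x : ℕ → ℝ) : Prop :=
  (Odd N → x ((N + 1) / 2) = 0) ∧ (Even N → x (N / 2) = - x (N / 2 + 1))

lemma S_eq_Ioc (x : ℕ → ℝ) (m : ℕ) : S x m = ∑ j ∈ Finset.Ioc 0 m, x j := by
  rw [S, ← Finset.Icc_add_one_left_eq_Ioc]; rfl

/-- Key induction from the middle outward. -/
lemma key_pairing (N : ℕ) (x : ℕ → ℝ) (hsol : IsSolution N x)
    (p q : ℕ) (hpq : p + q = N + 1) (hqp : q ≤ p) (hpq2 : p ≤ q + 1)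
    (h0 : x p = - x q) :
    ∀ k, k ≤ q - 1 → ∀ i, i ≤ k → x (p + i) = - x (q - i) := by
  intro k
  induction k with
  | zero =>
    intro _ i hi
    interval_cases i
    simpa using h0
  | succ k ih =>
    intro hk i hi
    have hb2 : k + 2 ≤ q := by omega
    have ihk : ∀ i, i ≤ k → x (p + i) = - x (q - i) := ih (by omega)
    rcases Nat.lt_or_ge i (k + 1) with h | h
    · exact ihk i (by omega)
    have hi' : i = k + 1 := by omega
    subst hi'
    have hzero : ∑ j ∈ Finset.Ioc (q - (k + 1)) (p + k), x j = 0 := by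
      apply Finset.sum_involution (fun j _ => N + 1 - j)
      · intro j hj
        simp only [Finset.mem_Ioc] at hj
        by_cases hjq : j ≤ q
        · have := ihk (q - j) (by omega)
          have e1 : p + (q - j) = N + 1 - j := by omega
          have e2 : q - (q - j) = j := by omega
          rw [e1, e2] at this
          linarith
        · have := ihk (j - p) (by omega)
          have e1 : p + (j - p) = j := by omega
          have e2 : q - (j - p) = N + 1 - j := by omega
          rw [e1, e2] at this
          linarith
      · intro j hj hne
        simp only [Finset.mem_Ioc] at hj
        intro hgj
        rcases Nat.lt_or_ge q p with hlt | hge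
        · omega
        · have hjp : j = p := by omega
          have hp0 : x p = 0 := by
            have hqq : q = p := by omega
            rw [hqq] at h0; linarith
          rw [hjp] at hne; exact hne hp0
      · intro j hj
        simp only [Finset.mem_Ioc] at hj ⊢
        omega
      · intro j hj
        simp only [Finset.mem_Ioc] at hj
        omega
    have hS : S x (p + k) = S x (q - (k + 1)) := by
      have hsplit := Finset.sum_Ioc_consecutive x
        (show (0:ℕ) ≤ q - (k + 1) by omega) (show q - (k + 1) ≤ p + k by omega)
      rw [S_eq_Ioc, S_eq_Ioc]
      linarith
    have hrec1 := hsol (p + k) (by omega) (by omega)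
    have hrec2 := hsol (q - (k + 1)) (by omega) (by omega)
    have e3 : q - (k + 1) + 1 = q - k := by omega
    rw [e3] at hrec2
    have hx1 : x (p + (k + 1)) = x (p + k) - 1 / S x (p + k) := by
      have h := hrec1.2
      rw [show p + k + 1 = p + (k + 1) from by ring] at h
      exact h
    have hpk : x (p + k) = - x (q - k) := ihk k le_rfl
    rw [hx1, hpk, hS, hrec2.2]
    ring

/-- Every zero-median solution of the recursion is antisymmetric:
`x_n = - x_{N+1-n}` for `n = 1, ..., N`. -/
theorem zero_median_antisymmetric (N : ℕ) (hN : 3 ≤ N) (x : ℕ → ℝ)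
    (hsol : IsSolution N x) (hmed : ZeroMedian N x) :
    ∀ n, 1 ≤ n → n ≤ N → x n = - x (N + 1 - n) := by
  obtain ⟨p, q, hpq, hqp, hpq2, h0⟩ :
      ∃ p q : ℕ, p + q = N + 1 ∧ q ≤ p ∧ p ≤ q + 1 ∧ x p = - x q := by
    rcases Nat.even_or_odd N with he | ho
    · obtain ⟨m, hm⟩ := he
      refine ⟨N / 2 + 1, N / 2, by omega, by omega, by omega, ?_⟩
      have := hmed.2 ⟨m, hm⟩
      linarith
    · obtain ⟨m, hm⟩ := ho
      refine ⟨(N + 1) / 2, (N + 1) / 2, by omega, le_rfl, by omega, ?_⟩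
      have := hmed.1 ⟨m, hm⟩
      rw [this]; simp
  intro n h1 hn
  have hq1 : 1 ≤ q := by omega
  by_cases hnq : n ≤ q
  · have := key_pairing N x hsol p q hpq hqp hpq2 h0 (q - 1) le_rfl (q - n) (by omega)
    have e1 : p + (q - n) = N + 1 - n := by omega
    have e2 : q - (q - n) = n := by omega
    rw [e1, e2] at this
    linarith
  · have := key_pairing N x hsol p q hpq hqp hpq2 h0 (q - 1) le_rfl (n - p) (by omega)
    have e1 : p + (n - p) = n := by omega
    have e2 : q - (n - p) = N + 1 - n := by omega
    rw [e1, e2] at this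
    linarith
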